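/- Work in S = MvPolynomial (Fin 4) (ZMod 3) with variables A, B, C, D. Let φ : MvPolynomial (Fin 5) (ZMod 3) → S be the (ZMod 3)-algebra homomorphism determined by X₀ ↦ A, X₁ ↦ D, X₂ ↦ B³ + A³C − A²B², X₃ ↦ B·D, X₄ ↦ C·D³. Then the kernel of φ is the principal ideal generated by P = X₀³X₄ − X₁³X₂ − X₀²X₁X₃² + X₃³. -/

import Mathlib

open MvPolynomial

namespace KernelInvariantAux

noncomputable def ePq :
    MvPolynomial (Fin 5) (ZMod 3) ≃ₐ[ZMod 3] Polynomial (MvPolynomial (Fin 4) (ZMod 3)) :=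
  (renameEquiv (ZMod 3) (Equiv.swap (0 : Fin 5) 4)).trans (finSuccEquiv (ZMod 3) 4)

noncomputable def eX :
    MvPolynomial (Fin 4) (ZMod 3) ≃ₐ[ZMod 3] Polynomial (MvPolynomial (Fin 3) (ZMod 3)) :=
  (renameEquiv (ZMod 3) (Equiv.swap (0 : Fin 4) 3)).trans (finSuccEquiv (ZMod 3) 3)

lemma primeX3 : Prime (X 3 : MvPolynomial (Fin 4) (ZMod 3)) := by
  rw [← MulEquiv.prime_iff eX.toMulEquiv]
  have h : eX (X 3) = Polynomial.X := by
    simp [eX, Equiv.swap_apply_def, finSuccEquiv_X_zero]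
  rw [show eX.toMulEquiv (X 3) = eX (X 3) from rfl, h]
  exact Polynomial.prime_X

lemma X3dvd_c_false : ¬ (X 3 : MvPolynomial (Fin 4) (ZMod 3)) ∣
    (X 2 ^ 3 - X 0 ^ 3 * X 1 - X 0 * X 2 ^ 2 * X 3 ^ 2) := by
  rintro ⟨g, hg⟩
  have := congrArg (eval (![0,0,1,0] : Fin 4 → ZMod 3)) hg
  simp at this

lemma a_ne : (X 3 ^ 3 : MvPolynomial (Fin 4) (ZMod 3)) ≠ 0 := pow_ne_zero _ (X_ne_zero _)

lemma prime_q : Prime (Polynomial.C (X 3 ^ 3 : MvPolynomial (Fin 4) (ZMod 3)) * Polynomial.X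
      + Polynomial.C (X 2 ^ 3 - X 0 ^ 3 * X 1 - X 0 * X 2 ^ 2 * X 3 ^ 2)) := by
  set a : MvPolynomial (Fin 4) (ZMod 3) := X 3 ^ 3 with ha
  set c : MvPolynomial (Fin 4) (ZMod 3) := X 2 ^ 3 - X 0 ^ 3 * X 1 - X 0 * X 2 ^ 2 * X 3 ^ 2 with hc
  rw [← UniqueFactorizationMonoid.irreducible_iff_prime]
  have hprim : (Polynomial.C a * Polynomial.X + Polynomial.C c).IsPrimitive := by
    intro r hr
    rw [Polynomial.C_dvd_iff_dvd_coeff] at hr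
    have hr1 : r ∣ a := by simpa using hr 1
    have hr0 : r ∣ c := by simpa using hr 0
    by_contra hru
    have hr_ne : r ≠ 0 := by rintro rfl; exact a_ne (zero_dvd_iff.mp hr1)
    obtain ⟨p, hpirr, hpr⟩ := WfDvdMonoid.exists_irreducible_factor hru hr_ne
    have hpprime : Prime p := UniqueFactorizationMonoid.irreducible_iff_prime.mp hpirr
    have hpX : p ∣ X 3 := hpprime.dvd_of_dvd_pow (hpr.trans hr1)
    have hassoc : Associated p (X 3) := hpirr.associated_of_dvd primeX3.irreducible hpX
    exact X3dvd_c_false (hassoc.symm.dvd.trans (hpr.trans hr0))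
  letI : NormalizationMonoid (MvPolynomial (Fin 4) (ZMod 3)) :=
    UniqueFactorizationMonoid.normalizationMonoid.toNormalizationMonoid
  letI : NormalizedGCDMonoid (MvPolynomial (Fin 4) (ZMod 3)) :=
    UniqueFactorizationMonoid.toNormalizedGCDMonoid _
  rw [hprim.irreducible_iff_irreducible_map_fraction_map
    (K := FractionRing (MvPolynomial (Fin 4) (ZMod 3)))]
  apply Polynomial.irreducible_of_degree_eq_one
  rw [Polynomial.map_add, Polynomial.map_mul, Polynomial.map_C, Polynomial.map_C,
    Polynomial.map_X]
  have hane : (algebraMap (MvPolynomial (Fin 4) (ZMod 3))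
      (FractionRing (MvPolynomial (Fin 4) (ZMod 3)))) a ≠ 0 :=
    (map_ne_zero_iff _ (IsFractionRing.injective (MvPolynomial (Fin 4) (ZMod 3))
      (FractionRing (MvPolynomial (Fin 4) (ZMod 3))))).mpr a_ne
  exact Polynomial.degree_linear hane

lemma ePq_P : ePq (X 0 ^ 3 * X 4 - X 1 ^ 3 * X 2 - X 0 ^ 2 * X 1 * X 3 ^ 2 + X 3 ^ 3) =
    Polynomial.C (X 3 ^ 3) * Polynomial.X
      + Polynomial.C (X 2 ^ 3 - X 0 ^ 3 * X 1 - X 0 * X 2 ^ 2 * X 3 ^ 2) := by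
  have h0 : ePq (X 0) = Polynomial.C (X 3) := by
    simp only [ePq, AlgEquiv.trans_apply, renameEquiv_apply, rename_X]
    rw [Equiv.swap_apply_left, show ((4:Fin 5)) = Fin.succ 3 from rfl, finSuccEquiv_X_succ]
  have h4 : ePq (X 4) = Polynomial.X := by
    simp only [ePq, AlgEquiv.trans_apply, renameEquiv_apply, rename_X]
    rw [Equiv.swap_apply_right, finSuccEquiv_X_zero]
  have h1 : ePq (X 1) = Polynomial.C (X 0) := by
    simp only [ePq, AlgEquiv.trans_apply, renameEquiv_apply, rename_X]
    rw [Equiv.swap_apply_of_ne_of_ne (by decide) (by decide),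
      show ((1:Fin 5)) = Fin.succ 0 from rfl, finSuccEquiv_X_succ]
  have h2 : ePq (X 2) = Polynomial.C (X 1) := by
    simp only [ePq, AlgEquiv.trans_apply, renameEquiv_apply, rename_X]
    rw [Equiv.swap_apply_of_ne_of_ne (by decide) (by decide),
      show ((2:Fin 5)) = Fin.succ 1 from rfl, finSuccEquiv_X_succ]
  have h3 : ePq (X 3) = Polynomial.C (X 2) := by
    simp only [ePq, AlgEquiv.trans_apply, renameEquiv_apply, rename_X]
    rw [Equiv.swap_apply_of_ne_of_ne (by decide) (by decide),
      show ((3:Fin 5)) = Fin.succ 2 from rfl, finSuccEquiv_X_succ]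
  simp only [map_add, map_sub, map_mul, map_pow, h0, h1, h2, h3, h4,
    Polynomial.C_sub, Polynomial.C_mul, Polynomial.C_pow]
  ring

lemma prime_P : Prime (X 0 ^ 3 * X 4 - X 1 ^ 3 * X 2 - X 0 ^ 2 * X 1 * X 3 ^ 2 + X 3 ^ 3 :
    MvPolynomial (Fin 5) (ZMod 3)) := by
  rw [← MulEquiv.prime_iff ePq.toMulEquiv,
    show ePq.toMulEquiv (X 0 ^ 3 * X 4 - X 1 ^ 3 * X 2 - X 0 ^ 2 * X 1 * X 3 ^ 2 + X 3 ^ 3)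
      = ePq (X 0 ^ 3 * X 4 - X 1 ^ 3 * X 2 - X 0 ^ 2 * X 1 * X 3 ^ 2 + X 3 ^ 3) from rfl,
    ePq_P]
  exact prime_q

lemma unit_calc2 {R : Type*} [CommRing R] (x0 x1 x2 x3 x4 w : R)
    (hwu : w * x1 = 1)
    (hrel : x1 ^ 3 * x2 = x3 ^ 3 + x0 ^ 3 * x4 - x0 ^ 2 * x1 * x3 ^ 2) :
    (x3 * w) ^ 3 + x0 ^ 3 * (x4 * w ^ 3) - x0 ^ 2 * (x3 * w) ^ 2 = x2 := by
  linear_combination (-(w ^ 3)) * hrel +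
    (x2 * (1 + w * x1 + w ^ 2 * x1 ^ 2) + x0 ^ 2 * x3 ^ 2 * w ^ 2) * hwu

lemma unit_calc3 {R : Type*} [CommRing R] (x1 x3 w : R) (hwu : w * x1 = 1) :
    x3 * w * x1 = x3 := by
  linear_combination x3 * hwu

lemma unit_calc4 {R : Type*} [CommRing R] (x1 x4 w : R) (hwu : w * x1 = 1) :
    x4 * w ^ 3 * x1 ^ 3 = x4 := by
  linear_combination (x4 * (w ^ 2 * x1 ^ 2 + w * x1 + 1)) * hwu

end KernelInvariantAux

open KernelInvariantAux in
set_option maxHeartbeats 2000000 in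
set_option synthInstance.maxHeartbeats 400000 in
theorem kernel_of_invariant_evaluation :
    RingHom.ker
      (MvPolynomial.aeval
        (R := ZMod 3)
        (![X 0, X 3, X 1 ^ 3 + X 0 ^ 3 * X 2 - X 0 ^ 2 * X 1 ^ 2, X 1 * X 3,
            X 2 * X 3 ^ 3] :
          Fin 5 → MvPolynomial (Fin 4) (ZMod 3)))
      = Ideal.span {(X 0 ^ 3 * X 4 - X 1 ^ 3 * X 2 - X 0 ^ 2 * X 1 * X 3 ^ 2 + X 3 ^ 3 :
          MvPolynomial (Fin 5) (ZMod 3))} := by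
  set v : Fin 5 → MvPolynomial (Fin 4) (ZMod 3) :=
    ![X 0, X 3, X 1 ^ 3 + X 0 ^ 3 * X 2 - X 0 ^ 2 * X 1 ^ 2, X 1 * X 3, X 2 * X 3 ^ 3] with hv
  set P : MvPolynomial (Fin 5) (ZMod 3) :=
    X 0 ^ 3 * X 4 - X 1 ^ 3 * X 2 - X 0 ^ 2 * X 1 * X 3 ^ 2 + X 3 ^ 3 with hP
  have hPv : aeval v P = 0 := by
    simp only [hP, map_add, map_sub, map_mul, map_pow, aeval_X, hv]
    simp only [Matrix.cons_val_zero, Matrix.cons_val_one, Matrix.head_cons,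
      Matrix.cons_val_two, Matrix.tail_cons, Matrix.cons_val_three, Matrix.cons_val_four]
    ring
  apply le_antisymm
  · -- hard direction
    intro f hf
    rw [RingHom.mem_ker] at hf
    set I : Ideal (MvPolynomial (Fin 5) (ZMod 3)) := Ideal.span {P} with hI
    set mk : MvPolynomial (Fin 5) (ZMod 3) →+* MvPolynomial (Fin 5) (ZMod 3) ⧸ I :=
      Ideal.Quotient.mk I with hmk
    set ι : (MvPolynomial (Fin 5) (ZMod 3) ⧸ I) →+* Localization.Away (mk (X 1)) :=
      algebraMap _ _ with hι
    have hu : IsUnit (ι (mk (X 1))) :=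
      IsLocalization.Away.algebraMap_isUnit (S := Localization.Away (mk (X 1))) (mk (X 1))
    set w : Localization.Away (mk (X 1)) := ↑hu.unit⁻¹ with hw
    have hwu : w * ι (mk (X 1)) = 1 := by
      rw [hw]; exact hu.val_inv_mul
    set ψ : MvPolynomial (Fin 4) (ZMod 3) →+* Localization.Away (mk (X 1)) :=
      eval₂Hom (ι.comp (mk.comp MvPolynomial.C))
        ![ι (mk (X 0)), ι (mk (X 3)) * w, ι (mk (X 4)) * w ^ 3, ι (mk (X 1))] with hψ
    have hrelQ : mk (X 1 ^ 3 * X 2) = mk (X 3 ^ 3 + X 0 ^ 3 * X 4 - X 0 ^ 2 * X 1 * X 3 ^ 2) := by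
      rw [hmk, Ideal.Quotient.eq]
      exact Ideal.mem_span_singleton.mpr ⟨-1, by rw [hP]; ring⟩
    have hrel : ι (mk (X 1)) ^ 3 * ι (mk (X 2)) =
        ι (mk (X 3)) ^ 3 + ι (mk (X 0)) ^ 3 * ι (mk (X 4))
          - ι (mk (X 0)) ^ 2 * ι (mk (X 1)) * ι (mk (X 3)) ^ 2 := by
      have := congrArg ι hrelQ
      simpa only [map_mul, map_pow, map_add, map_sub] using this
    have key : ψ.comp (aeval v : MvPolynomial (Fin 5) (ZMod 3) →ₐ[ZMod 3]
        MvPolynomial (Fin 4) (ZMod 3)).toRingHom = ι.comp mk := by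
      apply MvPolynomial.ringHom_ext
      · intro r
        simp [ψ, algebraMap_eq]
      · have p0 : (ψ.comp (aeval v : MvPolynomial (Fin 5) (ZMod 3) →ₐ[ZMod 3]
            MvPolynomial (Fin 4) (ZMod 3)).toRingHom) (X 0) = (ι.comp mk) (X 0) := by
          simp only [RingHom.comp_apply, AlgHom.toRingHom_eq_coe, RingHom.coe_coe, aeval_X, hv,
            Matrix.cons_val_zero, hψ, coe_eval₂Hom, eval₂_X]
        have p1 : (ψ.comp (aeval v : MvPolynomial (Fin 5) (ZMod 3) →ₐ[ZMod 3]
            MvPolynomial (Fin 4) (ZMod 3)).toRingHom) (X 1) = (ι.comp mk) (X 1) := by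
          simp only [RingHom.comp_apply, AlgHom.toRingHom_eq_coe, RingHom.coe_coe, aeval_X, hv,
            Matrix.cons_val_one, Matrix.head_cons, hψ, coe_eval₂Hom, eval₂_X, Matrix.cons_val_zero,
            Matrix.cons_val_three, Matrix.tail_cons]
        have p2 : (ψ.comp (aeval v : MvPolynomial (Fin 5) (ZMod 3) →ₐ[ZMod 3]
            MvPolynomial (Fin 4) (ZMod 3)).toRingHom) (X 2) = (ι.comp mk) (X 2) := by
          simp only [RingHom.comp_apply, AlgHom.toRingHom_eq_coe, RingHom.coe_coe, aeval_X, hv,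
            Matrix.cons_val_two, Matrix.tail_cons, Matrix.head_cons, hψ, coe_eval₂Hom,
            map_add, map_sub, map_mul, map_pow, eval₂_X, Matrix.cons_val_zero,
            Matrix.cons_val_one]
          exact unit_calc2 (R := Localization.Away (mk (X 1))) _ _ _ _ _ _ hwu hrel
        have p3 : (ψ.comp (aeval v : MvPolynomial (Fin 5) (ZMod 3) →ₐ[ZMod 3]
            MvPolynomial (Fin 4) (ZMod 3)).toRingHom) (X 3) = (ι.comp mk) (X 3) := by
          simp only [RingHom.comp_apply, AlgHom.toRingHom_eq_coe, RingHom.coe_coe, aeval_X, hv,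
            Matrix.cons_val_three, Matrix.tail_cons, Matrix.head_cons, hψ, coe_eval₂Hom,
            map_mul, eval₂_X, Matrix.cons_val_zero, Matrix.cons_val_one]
          exact unit_calc3 (R := Localization.Away (mk (X 1))) _ _ _ hwu
        have p4 : (ψ.comp (aeval v : MvPolynomial (Fin 5) (ZMod 3) →ₐ[ZMod 3]
            MvPolynomial (Fin 4) (ZMod 3)).toRingHom) (X 4) = (ι.comp mk) (X 4) := by
          simp only [RingHom.comp_apply, AlgHom.toRingHom_eq_coe, RingHom.coe_coe, aeval_X, hv,
            Matrix.cons_val_four, Matrix.cons_val_succ, Matrix.tail_cons, Matrix.head_cons, hψ,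
            coe_eval₂Hom, map_mul, map_pow, eval₂_X, Matrix.cons_val_two, Matrix.cons_val_one,
            Matrix.cons_val_three]
          exact unit_calc4 (R := Localization.Away (mk (X 1))) _ _ _ hwu
        intro i
        fin_cases i
        · exact p0
        · exact p1
        · exact p2
        · exact p3
        · exact p4
    have hzero : ι (mk f) = 0 := by
      have := RingHom.congr_fun key f
      simp only [RingHom.comp_apply, AlgHom.toRingHom_eq_coe, RingHom.coe_coe] at this
      rw [← this, hf, map_zero]
    rw [hι, IsLocalization.map_eq_zero_iff (Submonoid.powers (mk (X 1))) (Localization.Away (mk (X 1)))] at hzero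
    obtain ⟨⟨m, n, rfl⟩, hm⟩ := hzero
    have hmem : X 1 ^ n * f ∈ I := by
      rw [← Ideal.Quotient.eq_zero_iff_mem, ← hmk, map_mul, map_pow]
      exact hm
    rw [hI, Ideal.mem_span_singleton] at hmem
    rw [Ideal.mem_span_singleton]
    rcases (prime_P.2.2 _ _ hmem) with h | h
    · exfalso
      have hPX1 : P ∣ X 1 := by
        rw [hP]; exact (hP ▸ prime_P).dvd_of_dvd_pow (hP ▸ h)
      obtain ⟨g, hg⟩ := hPX1
      have := congrArg (eval (![0,1,0,0,0] : Fin 5 → ZMod 3)) hg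
      simp [hP] at this
    · exact h
  · rw [Ideal.span_le, Set.singleton_subset_iff, SetLike.mem_coe, RingHom.mem_ker]
    exact hPv
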